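/- When Ω = D and α = (z1,…,zn) is the tuple of the nodes themselves, d_α(z_i, z_j) = m(z_i, z_j) for all i, j. -/

import Mathlib

open Complex Metric Set

noncomputable def pdist (a b : ℂ) : ℝ := ‖(a - b) / (1 - (starRingEnd ℂ) a * b)‖

/-- The invariant function `d_α` for the open unit disc. -/
noncomputable def dInvD (n : ℕ) (z : Fin n → ℂ) (α : Fin n → ℂ) (i j : Fin n) : ℝ :=
  sSup {r : ℝ | ∃ f : ℂ → ℂ, DifferentiableOn ℂ f (ball (0:ℂ) 1) ∧
    MapsTo f (ball (0:ℂ) 1) (ball (0:ℂ) 1) ∧ (∃ c : ℂ, ∀ k, f (z k) = c * α k) ∧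
    r = pdist (f (z i)) (f (z j))}

noncomputable def mob (a w : ℂ) : ℂ := (a - w) / (1 - (starRingEnd ℂ) a * w)

lemma normSq_key (a w : ℂ) :
    Complex.normSq (1 - (starRingEnd ℂ) a * w) - Complex.normSq (a - w)
      = (1 - Complex.normSq a) * (1 - Complex.normSq w) := by
  simp only [Complex.normSq_apply, Complex.sub_re, Complex.sub_im, Complex.mul_re,
    Complex.mul_im, Complex.conj_re, Complex.conj_im, Complex.one_re, Complex.one_im]
  ring

lemma mob_mem (a w : ℂ) (ha : ‖a‖ < 1) (hw : ‖w‖ < 1) :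
    ‖mob a w‖ < 1 := by
  have hkey := normSq_key a w
  have hprod : 0 < (1 - Complex.normSq a) * (1 - Complex.normSq w) := by
    have h1 : Complex.normSq a < 1 := by
      rw [← Complex.sq_norm]; nlinarith [norm_nonneg a]
    have h2 : Complex.normSq w < 1 := by
      rw [← Complex.sq_norm]; nlinarith [norm_nonneg w]
    nlinarith
  have hlt : Complex.normSq (a - w) < Complex.normSq (1 - (starRingEnd ℂ) a * w) := by
    nlinarith
  have hdpos : 0 < ‖1 - (starRingEnd ℂ) a * w‖ := by
    rw [Complex.norm_def, Real.sqrt_pos]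
    nlinarith [Complex.normSq_nonneg (a - w)]
  rw [mob, norm_div, div_lt_one hdpos]
  rw [Complex.norm_def, Complex.norm_def]
  exact Real.sqrt_lt_sqrt (Complex.normSq_nonneg _) hlt

lemma mob_denom_ne (a w : ℂ) (ha : ‖a‖ < 1) (hw : ‖w‖ < 1) :
    (1 : ℂ) - (starRingEnd ℂ) a * w ≠ 0 := by
  have hkey := normSq_key a w
  have h1 : Complex.normSq a < 1 := by
    rw [← Complex.sq_norm]; nlinarith [norm_nonneg a]
  have h2 : Complex.normSq w < 1 := by
    rw [← Complex.sq_norm]; nlinarith [norm_nonneg w]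
  intro h
  rw [h] at hkey
  simp at hkey
  nlinarith [Complex.normSq_nonneg (a - w)]

lemma mob_invol (a w : ℂ) (ha : ‖a‖ < 1) (hw : ‖w‖ < 1) :
    mob a (mob a w) = w := by
  have hd := mob_denom_ne a w ha hw
  have h1 : (1 : ℂ) - (starRingEnd ℂ) a * a ≠ 0 := mob_denom_ne a a ha ha
  have hd2 : (1 : ℂ) - (starRingEnd ℂ) a * mob a w ≠ 0 :=
    mob_denom_ne a (mob a w) ha (mob_mem a w ha hw)
  have h1' : (1:ℂ) - a * (starRingEnd ℂ) a ≠ 0 := by rwa [mul_comm] at h1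
  simp only [mob] at hd2 ⊢
  field_simp [h1']
  have hden : (1 - (starRingEnd ℂ) a * w - (starRingEnd ℂ) a * (a - w)) ≠ 0 := by
    have he : 1 - (starRingEnd ℂ) a * w - (starRingEnd ℂ) a * (a - w)
        = 1 - (starRingEnd ℂ) a * a := by ring
    rw [he]; exact h1
  have hd' : (1:ℂ) - w * (starRingEnd ℂ) a ≠ 0 := by rwa [mul_comm] at hd
  have hden' : (1:ℂ) - w * (starRingEnd ℂ) a - (a - w) * (starRingEnd ℂ) a ≠ 0 := by
    rw [show (1:ℂ) - w * (starRingEnd ℂ) a - (a - w) * (starRingEnd ℂ) a = 1 - (starRingEnd ℂ) a * a by ring]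
    exact h1
  rw [div_eq_iff (by rw [one_sub_div hd']; exact div_ne_zero hden' hd')]
  field_simp
  ring

lemma mob_self (a : ℂ) : mob a a = 0 := by simp [mob]

lemma mob_zero (a : ℂ) : mob a 0 = a := by simp [mob]

lemma mob_diffOn (a : ℂ) (ha : ‖a‖ < 1) :
    DifferentiableOn ℂ (mob a) (ball (0:ℂ) 1) := by
  apply DifferentiableOn.div
  · exact (differentiable_const a).sub differentiable_id |>.differentiableOn
  · exact ((differentiable_const (1:ℂ)).sub ((differentiable_const _).mul differentiable_id)).differentiableOn
  · intro w hw
    exact mob_denom_ne a w ha (mem_ball_zero_iff.1 hw)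

lemma mob_mapsTo (a : ℂ) (ha : ‖a‖ < 1) :
    MapsTo (mob a) (ball (0:ℂ) 1) (ball (0:ℂ) 1) := by
  intro w hw
  rw [mem_ball_zero_iff] at hw ⊢
  exact mob_mem a w ha hw

lemma schwarz_pick {f : ℂ → ℂ} (hd : DifferentiableOn ℂ f (ball (0:ℂ) 1))
    (hm : MapsTo f (ball (0:ℂ) 1) (ball (0:ℂ) 1)) {a b : ℂ}
    (ha : a ∈ ball (0:ℂ) 1) (hb : b ∈ ball (0:ℂ) 1) :
    pdist (f a) (f b) ≤ pdist a b := by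
  rw [mem_ball_zero_iff] at ha hb
  have hfa : ‖f a‖ < 1 := by
    have := hm (mem_ball_zero_iff.2 ha); rwa [mem_ball_zero_iff] at this
  set g : ℂ → ℂ := fun w => mob (f a) (f (mob a w)) with hg
  have hgd : DifferentiableOn ℂ g (ball (0:ℂ) 1) := by
    apply DifferentiableOn.comp (mob_diffOn (f a) hfa)
      (DifferentiableOn.comp hd (mob_diffOn a ha) (mob_mapsTo a ha))
    exact (hm.comp (mob_mapsTo a ha))
  have hgm : MapsTo g (ball (0:ℂ) 1) (ball (0:ℂ) 1) :=
    (mob_mapsTo (f a) hfa).comp (hm.comp (mob_mapsTo a ha))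
  have hg0 : g 0 = 0 := by simp [hg, mob_zero, mob_self]
  have hz : ‖mob a b‖ < 1 := mob_mem a b ha hb
  have := Complex.norm_le_norm_of_mapsTo_ball hgd (hgm.mono_right ball_subset_closedBall) hg0 hz
  have hgb : g (mob a b) = mob (f a) (f b) := by
    simp [hg, mob_invol a b ha hb]
  rw [hgb] at this
  simpa [pdist, mob] using this

theorem stmt10 (n : ℕ) (z : Fin n → ℂ) (hz : ∀ j, z j ∈ ball (0:ℂ) 1)
    (hinj : Function.Injective z) (i j : Fin n) :
    dInvD n z z i j = pdist (z i) (z j) := by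
  have hmem : pdist (z i) (z j) ∈ {r : ℝ | ∃ f : ℂ → ℂ, DifferentiableOn ℂ f (ball (0:ℂ) 1) ∧
      MapsTo f (ball (0:ℂ) 1) (ball (0:ℂ) 1) ∧ (∃ c : ℂ, ∀ k, f (z k) = c * z k) ∧
      r = pdist (f (z i)) (f (z j))} := by
    exact ⟨id, differentiable_id.differentiableOn, mapsTo_id _, ⟨1, fun k => (one_mul _).symm⟩, rfl⟩
  have hub : ∀ r ∈ {r : ℝ | ∃ f : ℂ → ℂ, DifferentiableOn ℂ f (ball (0:ℂ) 1) ∧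
      MapsTo f (ball (0:ℂ) 1) (ball (0:ℂ) 1) ∧ (∃ c : ℂ, ∀ k, f (z k) = c * z k) ∧
      r = pdist (f (z i)) (f (z j))}, r ≤ pdist (z i) (z j) := by
    rintro r ⟨f, hfd, hfm, _, rfl⟩
    exact schwarz_pick hfd hfm (hz i) (hz j)
  apply le_antisymm
  · exact csSup_le ⟨_, hmem⟩ hub
  · exact le_csSup ⟨_, hub⟩ hmem
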